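/- If 𝒞 is a root class of groups, G is a group, N is a normal subgroup of G such that N is residually a 𝒞-group and G/N belongs to 𝒞, then G is residually a 𝒞-group. -/

import Mathlib

universe u

/-- A class of groups: a predicate on groups. -/
def GClass : Type (u + 1) := ∀ (G : Type u) [Group G], Prop

/-- Closure under isomorphism. -/
def ClosedIso (C : GClass.{u}) : Prop :=
  ∀ (G H : Type u) [Group G] [Group H], (G ≃* H) → C G → C H

/-- Closure under taking subgroups. -/
def ClosedSub (C : GClass.{u}) : Prop :=
  ∀ (G : Type u) [Group G] (H : Subgroup G), C G → C H

/-- Closure under extensions. -/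
def ClosedExt (C : GClass.{u}) : Prop :=
  ∀ (G : Type u) [Group G] (N : Subgroup G) [N.Normal], C N → C (G ⧸ N) → C G

/-- Closure under unrestricted direct powers ∏_{y ∈ Y} X with X, Y ∈ C. -/
def ClosedPow (C : GClass.{u}) : Prop :=
  ∀ (X Y : Type u) [Group X] [Group Y], C X → C Y → C (Y → X)

/-- A root class of groups. -/
def IsRootClass (C : GClass.{u}) : Prop :=
  (∃ (G : Type u) (_ : Group G), C G ∧ Nontrivial G) ∧
    ClosedIso C ∧ ClosedSub C ∧ ClosedExt C ∧ ClosedPow C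

/-- `G` is residually a `C`-group. -/
def Residually (C : GClass.{u}) (G : Type u) [Group G] : Prop :=
  ∀ g : G, g ≠ 1 → ∃ (Q : Type u) (_ : Group Q) (σ : G →* Q),
    C Q ∧ Function.Surjective σ ∧ σ g ≠ 1

theorem stmt_4' (C : (∀ (G : Type u) [Group G], Prop))
    (hIso : ∀ (G H : Type u) [Group G] [Group H], (G ≃* H) → C G → C H)
    (hSub : ∀ (G : Type u) [Group G] (H : Subgroup G), C G → C H)
    (hExt : ∀ (G : Type u) [Group G] (N : Subgroup G) [N.Normal], C N → C (G ⧸ N) → C G)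
    (hPow : ∀ (X Y : Type u) [Group X] [Group Y], C X → C Y → C (Y → X))
    (G : Type u) [Group G] (N : Subgroup G) [N.Normal]
    (hN : ∀ g : N, g ≠ 1 → ∃ (Q : Type u) (_ : Group Q) (σ : N →* Q),
      C Q ∧ Function.Surjective σ ∧ σ g ≠ 1)
    (hQ : C (G ⧸ N)) :
    ∀ g : G, g ≠ 1 → ∃ (Q : Type u) (_ : Group Q) (σ : G →* Q),
      C Q ∧ Function.Surjective σ ∧ σ g ≠ 1 := by
  intro g hg
  by_cases hgN : g ∈ N
  · -- g is a nontrivial element of N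
    obtain ⟨Q, _, σ, hCQ, hσsurj, hσg⟩ := hN ⟨g, hgN⟩ (by simpa using hg)
    -- K' : image of ker σ in G
    set K' : Subgroup G := (σ.ker).map N.subtype with hK'
    have hK'leN : K' ≤ N := by
      rintro x ⟨k, _, rfl⟩; exact k.2
    -- K' is normalized by elements of N
    have hK'conj : ∀ m ∈ N, ∀ w ∈ K', m⁻¹ * w * m ∈ K' := by
      rintro m hm w ⟨k, hk, rfl⟩
      refine ⟨⟨m, hm⟩⁻¹ * k * ⟨m, hm⟩, ?_, rfl⟩
      have hk' : σ k = 1 := hk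
      show σ _ = 1
      rw [map_mul, map_mul, hk', mul_one, map_inv, inv_mul_cancel]
    set M : Subgroup G := K'.normalCore with hM
    have hMleK' : M ≤ K' := K'.normalCore_le
    have hMleN : M ≤ N := hMleK'.trans hK'leN
    -- the transversal
    set t : G ⧸ N → G := Quotient.out with ht
    have htmk : ∀ y : G ⧸ N, QuotientGroup.mk (t y) = y := fun y => Quotient.out_eq' y
    -- conjugation homomorphism
    have conjmem : ∀ (x : G) (n : N), x⁻¹ * (n : G) * x ∈ N := by
      intro x n
      simpa using (inferInstance : N.Normal).conj_mem n n.2 x⁻¹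
    -- φ : N →* (G⧸N → Q)
    set φ : N →* ((G ⧸ N) → Q) :=
      { toFun := fun n y => σ ⟨(t y)⁻¹ * n * t y, conjmem (t y) n⟩
        map_one' := by
          funext y
          simp only [Pi.one_apply]
          convert σ.map_one using 2
          ext; simp
        map_mul' := by
          intro a b
          funext y
          simp only [Pi.mul_apply, ← map_mul]
          congr 1
          ext
          push_cast
          group } with hφ
    -- kernel of φ is M ∩ N
    have hker : φ.ker = M.subgroupOf N := by
      ext n
      simp only [MonoidHom.mem_ker, hφ, MonoidHom.coe_mk, OneHom.coe_mk,
        Subgroup.mem_subgroupOf, funext_iff, Pi.one_apply]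
      constructor
      · intro h
        intro b
        -- b * n * b⁻¹ ∈ K'
        set y : G ⧸ N := QuotientGroup.mk b⁻¹ with hy
        have hmem : (t y)⁻¹ * b⁻¹ ∈ N := by
          rw [← QuotientGroup.eq_one_iff, QuotientGroup.mk_mul, QuotientGroup.mk_inv,
            htmk, hy]
          simp
        have h1 : (t y)⁻¹ * (n : G) * t y ∈ K' := ⟨⟨_, conjmem (t y) n⟩, h y, rfl⟩
        have h2 := hK'conj _ hmem _ h1
        have : b * (n : G) * b⁻¹ = ((t y)⁻¹ * b⁻¹)⁻¹ * ((t y)⁻¹ * (n : G) * t y) * ((t y)⁻¹ * b⁻¹) := by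
          group
        rw [this]
        exact h2
      · intro h y
        have h1 : (t y)⁻¹ * (n : G) * ((t y)⁻¹)⁻¹ ∈ K' := h ((t y)⁻¹)
        rw [inv_inv] at h1
        obtain ⟨k, hk, hkeq⟩ := h1
        have : (⟨(t y)⁻¹ * (n : G) * t y, conjmem (t y) n⟩ : N) = k :=
          Subtype.ext hkeq.symm
        rw [this]
        exact hk
    -- the map N →* N.map (mk' M)
    haveI : M.Normal := Subgroup.normalCore_normal K'
    set N' : Subgroup (G ⧸ M) := N.map (QuotientGroup.mk' M) with hN'
    haveI hN'norm : N'.Normal :=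
      Subgroup.Normal.map inferInstance _ (QuotientGroup.mk'_surjective M)
    set ρ : N →* N' := (QuotientGroup.mk' M).subgroupMap N with hρ
    have hρsurj : Function.Surjective ρ := by
      rintro ⟨x, n, hn, rfl⟩
      exact ⟨⟨n, hn⟩, rfl⟩
    have hρker : ρ.ker = M.subgroupOf N := by
      ext n
      simp only [MonoidHom.mem_ker, hρ, Subgroup.mem_subgroupOf]
      constructor
      · intro h
        have h2 : QuotientGroup.mk' M (n : G) = 1 := congrArg Subtype.val h
        rw [QuotientGroup.mk'_apply, QuotientGroup.eq_one_iff] at h2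
        exact h2
      · intro h
        refine Subtype.ext ?_
        show QuotientGroup.mk' M (n : G) = 1
        rw [QuotientGroup.mk'_apply, QuotientGroup.eq_one_iff]
        exact h
    -- C N'
    have hCpow : C ((G ⧸ N) → Q) := hPow Q (G ⧸ N) hCQ hQ
    have hCrange : C φ.range := hSub _ φ.range hCpow
    have hCquot : C (N ⧸ φ.ker) :=
      hIso _ _ (QuotientGroup.quotientKerEquivRange φ).symm hCrange
    have e : φ.ker = ρ.ker := by rw [hρker, hker]
    have hCquot2 : C (N ⧸ ρ.ker) :=
      hIso _ _ (QuotientGroup.quotientMulEquivOfEq e) hCquot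
    have hCN' : C N' :=
      hIso _ _ (QuotientGroup.quotientKerEquivOfSurjective ρ hρsurj) hCquot2
    -- C ((G⧸M)⧸N') via third isomorphism theorem
    have hCQ' : C ((G ⧸ M) ⧸ N') :=
      hIso _ _ (QuotientGroup.quotientQuotientEquivQuotient M N hMleN).symm hQ
    have hCGM : C (G ⧸ M) := hExt _ N' hCN' hCQ'
    refine ⟨G ⧸ M, inferInstance, QuotientGroup.mk' M, hCGM,
      QuotientGroup.mk'_surjective M, ?_⟩
    rw [QuotientGroup.mk'_apply, Ne, QuotientGroup.eq_one_iff]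
    intro hgM
    obtain ⟨k, hk, hkeq⟩ := hMleK' hgM
    have : (⟨g, hgN⟩ : N) = k := Subtype.ext hkeq.symm
    exact hσg (this ▸ hk)
  · exact ⟨G ⧸ N, inferInstance, QuotientGroup.mk' N, hQ,
      QuotientGroup.mk'_surjective N, by
        rw [QuotientGroup.mk'_apply, Ne, QuotientGroup.eq_one_iff]; exact hgN⟩


/-- Proposition 3.3 (3) (Gruenberg's lemma): an extension of a residually `C`-group by a
`C`-group is residually a `C`-group, for a root class `C`. -/
theorem stmt_4 (C : GClass.{u}) (hC : IsRootClass C)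
    (G : Type u) [Group G] (N : Subgroup G) [N.Normal]
    (hN : Residually C N) (hQ : C (G ⧸ N)) :
    Residually C G := by
  obtain ⟨-, hIso, hSub, hExt, hPow⟩ := hC
  exact stmt_4' C hIso hSub hExt hPow G N hN hQ
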